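/- Fix v ∈ ℝᵐ. There exist d₀, d₁ ∈ ℝᵐ such that for all μ > 0, the Newton direction satisfies d(v,μ) = d₀ + (1/√μ)·d₁. -/

import Mathlib

open Matrix

/-- Elementwise exponentiation `e^v` of a vector. -/
noncomputable def expV {m : ℕ} (v : Fin m → ℝ) : Fin m → ℝ := fun i => Real.exp (v i)

/-- The log-domain Newton system: `(d, x)` satisfies
`√μ·Aᵀ(eᵛ + eᵛ∘d) = Wx + c` and `√μ·(e^{−v} − e^{−v}∘d) = Ax + b`. -/
noncomputable def IsNewton {m n : ℕ} (A : Matrix (Fin m) (Fin n) ℝ) (b : Fin m → ℝ)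
    (c : Fin n → ℝ) (W : Matrix (Fin n) (Fin n) ℝ) (μ : ℝ) (v d : Fin m → ℝ)
    (x : Fin n → ℝ) : Prop :=
  Real.sqrt μ • (Aᵀ).mulVec (expV v + expV v * d) = W.mulVec x + c ∧
  Real.sqrt μ • (expV (-v) - expV (-v) * d) = A.mulVec x + b

/-- `v` is a centered point for parameter `μ`, witnessed by `x`:
`√μ·Aᵀeᵛ = Wx + c` and `√μ·e^{−v} = Ax + b`. -/
noncomputable def IsCentered {m n : ℕ} (A : Matrix (Fin m) (Fin n) ℝ) (b : Fin m → ℝ)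
    (c : Fin n → ℝ) (W : Matrix (Fin n) (Fin n) ℝ) (μ : ℝ) (v : Fin m → ℝ)
    (x : Fin n → ℝ) : Prop :=
  Real.sqrt μ • (Aᵀ).mulVec (expV v) = W.mulVec x + c ∧
  Real.sqrt μ • expV (-v) = A.mulVec x + b

/-- The divergence `h(u,v) := ⟨eᵘ, e^{−v}⟩ + ⟨e^{−u}, eᵛ⟩ − 2m`. -/
noncomputable def diverg {m : ℕ} (u v : Fin m → ℝ) : ℝ :=
  (∑ i, Real.exp (u i) * Real.exp (-v i)) + (∑ i, Real.exp (-u i) * Real.exp (v i))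
    - 2 * m

/-- The Euclidean norm of a vector in `ℝᵐ`. -/
noncomputable def enorm {m : ℕ} (d : Fin m → ℝ) : ℝ := Real.sqrt (∑ i, d i ^ 2)

section aux

variable {m n : ℕ}

lemma posdef_aux (A : Matrix (Fin m) (Fin n) ℝ) (W : Matrix (Fin n) (Fin n) ℝ)
    (hW : W.PosSemidef) (hAW : (Aᵀ * A + W).PosDef) (v : Fin m → ℝ) :
    (Aᵀ * (Matrix.diagonal fun i => Real.exp (2 * v i)) * A + W).PosDef := by
  set E : Matrix (Fin m) (Fin m) ℝ := Matrix.diagonal fun i => Real.exp (2 * v i) with hE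
  have hEpsd : E.PosSemidef := (Matrix.PosDef.diagonal fun i => Real.exp_pos _).posSemidef
  have hAEA : (Aᵀ * E * A).PosSemidef := by
    have := hEpsd.conjTranspose_mul_mul_same A
    rwa [Matrix.conjTranspose_eq_transpose_of_trivial] at this
  refine Matrix.PosDef.of_dotProduct_mulVec_pos (hAEA.1.add hW.1) fun x hx => ?_
  have key : ∀ (D : Matrix (Fin m) (Fin m) ℝ),
      x ⬝ᵥ (Aᵀ * D * A + W) *ᵥ x
        = (A *ᵥ x) ⬝ᵥ (D *ᵥ (A *ᵥ x)) + x ⬝ᵥ W *ᵥ x := by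
    intro D
    rw [Matrix.add_mulVec, dotProduct_add, ← Matrix.mulVec_mulVec,
      ← Matrix.mulVec_mulVec, Matrix.dotProduct_mulVec x Aᵀ, Matrix.vecMul_transpose]
  have hT : 0 ≤ x ⬝ᵥ W *ᵥ x := by simpa using hW.dotProduct_mulVec_nonneg x
  have hpos : 0 < x ⬝ᵥ (Aᵀ * A + W) *ᵥ x := by simpa using hAW.dotProduct_mulVec_pos hx
  have h1 : Aᵀ * A = Aᵀ * (1 : Matrix (Fin m) (Fin m) ℝ) * A := by rw [Matrix.mul_one]
  rw [h1, key 1, Matrix.one_mulVec] at hpos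
  have goal : 0 < (A *ᵥ x) ⬝ᵥ (E *ᵥ (A *ᵥ x)) + x ⬝ᵥ W *ᵥ x := by
    set z := A *ᵥ x with hz
    have hS1 : (z) ⬝ᵥ (E *ᵥ z) = ∑ i, Real.exp (2 * v i) * (z i)^2 := by
      simp [dotProduct, hE, Matrix.mulVec_diagonal]
      congr 1; funext i; ring
    rcases lt_or_ge 0 (x ⬝ᵥ W *ᵥ x) with hT' | hT'
    · have : 0 ≤ z ⬝ᵥ (E *ᵥ z) := by
        rw [hS1]; positivity
      linarith
    · have hT0 : x ⬝ᵥ W *ᵥ x = 0 := le_antisymm hT' hT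
      have hz0 : 0 < z ⬝ᵥ z := by
        have : z ⬝ᵥ z = ∑ i, (z i)^2 := by simp [dotProduct, sq]
        rw [this]
        have hzne : ∃ i, z i ≠ 0 := by
          by_contra h
          push_neg at h
          have : z ⬝ᵥ z = 0 := by simp [dotProduct, h]
          rw [hT0, this] at hpos; linarith
        obtain ⟨i, hi⟩ := hzne
        refine Finset.sum_pos' (fun j _ => sq_nonneg _) ⟨i, Finset.mem_univ i, ?_⟩
        positivity
      rw [hS1]
      have : 0 < ∑ i, Real.exp (2 * v i) * (z i)^2 := by
        have hzne : ∃ i, z i ≠ 0 := by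
          by_contra h
          push_neg at h
          have : z ⬝ᵥ z = 0 := by simp [dotProduct, h]
          rw [this] at hz0; linarith
        obtain ⟨i, hi⟩ := hzne
        refine Finset.sum_pos' (fun j _ => by positivity) ⟨i, Finset.mem_univ i, ?_⟩
        positivity
      linarith
  simp only [star_trivial]
  rw [key E]
  exact goal

end aux

/-- fix `v ∈ ℝᵐ`. There exist `d₀, d₁ ∈ ℝᵐ` such that for every
`μ > 0` the Newton direction satisfies `d(v,μ) = d₀ + (1/√μ)·d₁`. -/
theorem stmt_17 {m n : ℕ} (A : Matrix (Fin m) (Fin n) ℝ) (b : Fin m → ℝ) (c : Fin n → ℝ)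
    (W : Matrix (Fin n) (Fin n) ℝ) (hW : W.PosSemidef) (hAW : (Aᵀ * A + W).PosDef)
    (v : Fin m → ℝ) :
    ∃ d₀ d₁ : Fin m → ℝ, ∀ μ : ℝ, 0 < μ →
      ∀ d : Fin m → ℝ, ∀ x : Fin n → ℝ, IsNewton A b c W μ v d x →
        d = d₀ + (Real.sqrt μ)⁻¹ • d₁ := by
  classical
  set E : Matrix (Fin m) (Fin m) ℝ := Matrix.diagonal fun i => Real.exp (2 * v i) with hE
  set M : Matrix (Fin n) (Fin n) ℝ := Aᵀ * E * A + W with hM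
  have hMpd : M.PosDef := posdef_aux A W hW hAW v
  have hdet : IsUnit M.det := (Matrix.isUnit_iff_isUnit_det M).mp hMpd.isUnit
  have hMinj : Function.Injective (M.mulVec) := Matrix.mulVec_injective_iff_isUnit.mpr hMpd.isUnit
  set e2 : Fin m → ℝ := fun i => Real.exp (2 * v i) with he2
  set p : Fin n → ℝ := (2 : ℝ) • Aᵀ.mulVec (expV v) with hp
  set q : Fin n → ℝ := -(Aᵀ.mulVec (e2 * b)) - c with hq
  set x₀ : Fin n → ℝ := M⁻¹.mulVec p with hx₀
  set x₁ : Fin n → ℝ := M⁻¹.mulVec q with hx₁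
  refine ⟨(1 : Fin m → ℝ) - expV v * A.mulVec x₀, -(expV v * (A.mulVec x₁ + b)), ?_⟩
  intro μ hμ d x ⟨h1, h2⟩
  set s : ℝ := Real.sqrt μ with hs
  have hspos : 0 < s := Real.sqrt_pos.mpr hμ
  have hsne : s ≠ 0 := hspos.ne'
  -- Step A: express d in terms of x
  have hd : d = (1 : Fin m → ℝ) - s⁻¹ • (expV v * (A.mulVec x + b)) := by
    funext i
    have h2i := congrFun h2 i
    simp only [Pi.smul_apply, Pi.sub_apply, Pi.mul_apply, Pi.add_apply, Pi.neg_apply, expV,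
      smul_eq_mul, Real.exp_neg, Pi.one_apply] at h2i ⊢
    have hexp : Real.exp (v i) ≠ 0 := Real.exp_ne_zero _
    field_simp at h2i ⊢
    nlinarith [h2i]
  -- Step B: the equation M x = s p + q
  have hMx : M.mulVec x = s • p + q := by
    have hev : expV v + expV v * d
        = (2 : ℝ) • expV v - s⁻¹ • (e2 * (A.mulVec x) + e2 * b) := by
      funext i
      have hdi := congrFun hd i
      simp only [Pi.add_apply, Pi.mul_apply, Pi.smul_apply, Pi.sub_apply, Pi.one_apply,
        smul_eq_mul, expV, he2] at hdi ⊢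
      have h2exp : Real.exp (2 * v i) = Real.exp (v i) * Real.exp (v i) := by
        rw [← Real.exp_add]; ring_nf
      rw [hdi, h2exp]; ring
    have := h1
    rw [hev] at this
    have expand : s • Aᵀ.mulVec ((2 : ℝ) • expV v - s⁻¹ • (e2 * (A.mulVec x) + e2 * b))
        = s • p - (Aᵀ.mulVec (e2 * (A.mulVec x)) + Aᵀ.mulVec (e2 * b)) := by
      rw [Matrix.mulVec_sub, Matrix.mulVec_smul, Matrix.mulVec_smul, Matrix.mulVec_add, hp]
      match_scalars <;> field_simp
    rw [expand] at this
    have hEA : Aᵀ.mulVec (e2 * (A.mulVec x)) = (Aᵀ * E * A).mulVec x := by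
      have hEv : e2 * (A.mulVec x) = E.mulVec (A.mulVec x) := by
        funext i
        simp [hE, Matrix.mulVec_diagonal, he2]
      rw [hEv, Matrix.mulVec_mulVec, Matrix.mulVec_mulVec]
    rw [hEA] at this
    have hWx : W.mulVec x
        = s • p - ((Aᵀ * E * A).mulVec x + Aᵀ.mulVec (e2 * b)) - c :=
      eq_sub_of_add_eq this.symm
    have : (Aᵀ * E * A).mulVec x + W.mulVec x = s • p + (-(Aᵀ.mulVec (e2 * b)) - c) := by
      rw [hWx]; abel
    rw [hM, Matrix.add_mulVec]
    rw [this, hq]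
  -- Step C: solve for x
  have hxeq : x = s • x₀ + x₁ := by
    apply hMinj
    rw [hMx, Matrix.mulVec_add, Matrix.mulVec_smul, hx₀, hx₁,
      Matrix.mulVec_mulVec, Matrix.mulVec_mulVec, Matrix.mul_nonsing_inv M hdet,
      Matrix.one_mulVec, Matrix.one_mulVec]
  -- Step D: conclude
  rw [hd, hxeq]
  funext i
  simp only [Pi.add_apply, Pi.sub_apply, Pi.mul_apply, Pi.smul_apply, Pi.one_apply,
    Pi.neg_apply, smul_eq_mul, Matrix.mulVec_add, Matrix.mulVec_smul]
  field_simp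
  ring
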